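/- arXiv:2512.19873 — 3 statements merged into one kernel-verified Lean document; each statement's English description precedes it below -/
import Mathlib

section
/- Let G be an abelian group and let Ψ : M ↦ Ψ_M be an assignment from a monoid of endomorphisms of G such that Ψ is multiplicative (Ψ_{M·N} = Ψ_M ∘ Ψ_N), Ψ of the unit is the identity, and for each 'cone relation' the map satisfies Ψ_{Cone(f)} = Ψ_N − Ψ_M whenever f : M → N. Suppose M is invertible with inverse M̃, and there exist l maps f_1,…,f_l from the unit A to M^n shifted by m (so each Ψ_{Cone(f_i)} = (−1)^m Ψ_M^n − id) whose cones compose to zero. Then ((−1)^m Ψ_M^n − id)^l = 0 on G, and consequently (Ψ_M^{2n} − id)^l = 0. -/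
/-- Grothendieck-group shadow of cyclotomicity: if `Ψ` is a multiplicative
assignment of additive endomorphisms of `G`, `M` is invertible, and there are
`l` "cone values" `(-1)^m Ψ_M^n - 1` whose product vanishes, then
`((-1)^m Ψ_M^n - 1)^l = 0`, hence `(Ψ_M^(2n) - 1)^l = 0`. -/
theorem stmt1 {G Mon : Type*} [AddCommGroup G] [Monoid Mon]
    (Ψ : Mon →* AddMonoid.End G) (M M' : Mon)
    (hinv : M * M' = 1 ∧ M' * M = 1)
    (m n l : ℕ) (hn : 1 ≤ n) (hl : 1 ≤ l)
    (cone : Fin l → AddMonoid.End G)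
    (hcone : ∀ i, cone i = (-1) ^ m * (Ψ M) ^ n - 1)
    (hzero : (List.ofFn cone).prod = 0) :
    ((-1) ^ m * (Ψ M) ^ n - 1) ^ l = 0 ∧ ((Ψ M) ^ (2 * n) - 1) ^ l = 0 := by
  have hcone' : cone = fun _ => (-1) ^ m * (Ψ M) ^ n - 1 := funext hcone
  have h1 : ((-1) ^ m * (Ψ M) ^ n - 1) ^ l = 0 := by
    rw [← hzero, hcone', List.ofFn_const, List.prod_replicate]
  refine ⟨h1, ?_⟩
  set x : AddMonoid.End G := (Ψ M) ^ n with hx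
  have hpow : (Ψ M) ^ (2 * n) = x * x := by
    rw [mul_comm 2 n, pow_mul, sq]
  have key : (Ψ M) ^ (2 * n) - 1
      = ((-1) ^ m * x - 1) * ((-1) ^ m * x + 1) := by
    rw [hpow]
    rcases Nat.even_or_odd m with h | h
    · rw [h.neg_one_pow]
      noncomm_ring
    · rw [h.neg_one_pow]
      noncomm_ring
  have hcomm : Commute ((-1) ^ m * x - 1) ((-1) ^ m * x + 1) := by
    unfold Commute SemiconjBy
    noncomm_ring
  rw [key, hcomm.mul_pow, h1, zero_mul]
end

section
/- Let a : ℕ × ℕ → ℕ satisfy a(k, i) ≤ a(k−1, i) + a(k−1, i+1) for all k ≥ 1 and all i, and a(k, l) = 0 for all k. Then for all k, a(k, 0) ≤ Σ_{i=0}^{l−1} C(k, i) · a(0, i). -/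
/-- Pascal-type recursion with absorbing boundary at column `l`:
if `a(k,i) ≤ a(k-1,i) + a(k-1,i+1)` and `a(k,l) = 0`, then
`a(k,0) ≤ ∑_{i<l} C(k,i) * a(0,i)`. -/
theorem stmt13 (l : ℕ) (a : ℕ → ℕ → ℕ)
    (hrec : ∀ k, 1 ≤ k → ∀ i, a k i ≤ a (k - 1) i + a (k - 1) (i + 1))
    (hbdry : ∀ k, a k l = 0) :
    ∀ k, a k 0 ≤ ∑ i ∈ Finset.range l, k.choose i * a 0 i := by
  have key : ∀ k, ∀ j, j ≤ l →
      a k j ≤ ∑ i ∈ Finset.range (l - j), k.choose i * a 0 (j + i) := by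
    intro k
    induction k with
    | zero =>
      intro j hj
      rcases eq_or_lt_of_le hj with h | h
      · simp [h, hbdry]
      · have hm : l - j = (l - (j + 1)) + 1 := by omega
        rw [hm, Finset.sum_range_succ']
        simp only [Nat.choose_zero_right, one_mul, Nat.add_zero]
        exact Nat.le_add_left _ _
    | succ k ih =>
      intro j hj
      rcases eq_or_lt_of_le hj with h | h
      · simp [h, hbdry]
      · have h1 : a (k + 1) j ≤ a k j + a k (j + 1) := by
          have := hrec (k + 1) (by omega) j
          simpa using this
        have h2 := ih j hj
        have h3 := ih (j + 1) (by omega)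
        have hm : l - j = (l - (j + 1)) + 1 := by omega
        set m := l - (j + 1) with hmdef
        calc a (k + 1) j ≤ a k j + a k (j + 1) := h1
          _ ≤ (∑ i ∈ Finset.range (l - j), k.choose i * a 0 (j + i)) +
              ∑ i ∈ Finset.range m, k.choose i * a 0 (j + 1 + i) :=
            Nat.add_le_add h2 h3
          _ = ∑ i ∈ Finset.range (l - j), (k + 1).choose i * a 0 (j + i) := by
            rw [hm, Finset.sum_range_succ', Finset.sum_range_succ']
            simp only [Nat.choose_zero_right, one_mul, Nat.add_zero,
              Nat.choose_succ_succ, Nat.add_mul]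
            rw [Finset.sum_add_distrib]
            have hs : ∑ i ∈ Finset.range m, k.choose i * a 0 (j + 1 + i)
                = ∑ i ∈ Finset.range m, k.choose i * a 0 (j + (i + 1)) :=
              Finset.sum_congr rfl fun i _ => by
                rw [show j + 1 + i = j + (i + 1) by omega]
            rw [hs]
            ring
  intro k
  have := key k 0 (Nat.zero_le l)
  simpa using this
end

section
/- Let F, G be exact endofunctors of a triangulated category with generator T and let δ_t denote complexity with respect to T. If δ_t satisfies the subadditivity δ_t(T, X) ≤ δ_t(T, Y) + δ_t(T, Z) for every triangle Y → X → Z → Y[1], then for any family of objects X_0,…,X_l with triangles X_i → F X_i → X_{i+1} → X_i[1], X_0 = T, X_l = 0, the entropy h_t(F) = lim (1/N) log δ_t(T, F^N T) satisfies h_t(F) ≤ 0. -/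
open CategoryTheory CategoryTheory.Pretriangulated CategoryTheory.Limits ZeroObject

section Aux

variable {C : Type*} [Category C] [Limits.HasZeroObject C] [Preadditive C]
    [HasShift C ℤ] [∀ (k : ℤ), (shiftFunctor C k).Additive] [Pretriangulated C]

/-- An isomorphism gives a distinguished triangle with zero third object. -/
lemma stmt18_iso_triangle {X Y : C} (e : X ≅ Y) :
    Triangle.mk e.hom (0 : Y ⟶ 0) (0 : (0 : C) ⟶ X⟦(1 : ℤ)⟧) ∈ distTriang C := by
  refine isomorphic_distinguished _ (contractible_distinguished X) _ ?_
  exact Triangle.isoMk _ _ (Iso.refl X) e.symm (Iso.refl 0) (by exact e.hom_inv_id.trans (Category.comp_id _).symm) (by exact Limits.zero_comp.trans Limits.comp_zero.symm) (by exact Limits.zero_comp.trans Limits.comp_zero.symm)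

lemma stmt18_delta_le (δ : ℝ → C → ℝ)
    (hzero : ∀ t (Z : C), Limits.IsZero Z → δ t Z = 0)
    (hsub : ∀ t (Tri : Triangle C), Tri ∈ (distTriang C) →
      δ t Tri.obj₂ ≤ δ t Tri.obj₁ + δ t Tri.obj₃)
    (t : ℝ) {X Y : C} (e : X ≅ Y) : δ t Y ≤ δ t X := by
  have h := hsub t _ (stmt18_iso_triangle e)
  simpa [hzero t (0 : C) (Limits.isZero_zero C)] using h

lemma stmt18_delta_congr (δ : ℝ → C → ℝ)
    (hzero : ∀ t (Z : C), Limits.IsZero Z → δ t Z = 0)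
    (hsub : ∀ t (Tri : Triangle C), Tri ∈ (distTriang C) →
      δ t Tri.obj₂ ≤ δ t Tri.obj₁ + δ t Tri.obj₃)
    (t : ℝ) {X Y : C} (e : X ≅ Y) : δ t X = δ t Y :=
  le_antisymm (stmt18_delta_le δ hzero hsub t e.symm) (stmt18_delta_le δ hzero hsub t e)

lemma stmt18_iter_isZero (F : C ⥤ C) [F.Additive] {Z : C} (hZ : Limits.IsZero Z) (k : ℕ) :
    Limits.IsZero ((fun Y => F.obj Y)^[k] Z) := by
  induction k with
  | zero => exact hZ
  | succ k ih =>
    rw [Function.iterate_succ_apply']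
    exact F.map_isZero ih

/-- Iterate of a functor maps isomorphisms to isomorphisms. -/
noncomputable def stmt18_iter_iso (F : C ⥤ C) {A B : C} (e : A ≅ B) (k : ℕ) :
    (fun Y => F.obj Y)^[k] A ≅ (fun Y => F.obj Y)^[k] B := by
  induction k with
  | zero => exact e
  | succ k ih =>
    rw [Function.iterate_succ_apply', Function.iterate_succ_apply']
    exact F.mapIso ih

noncomputable def stmt18_iter_shift (F : C ⥤ C) [F.CommShift ℤ] (T : C) (k : ℕ) :
    ((fun Y => F.obj Y)^[k] T)⟦(1 : ℤ)⟧ ≅ (fun Y => F.obj Y)^[k] (T⟦(1 : ℤ)⟧) := by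
  induction k with
  | zero => exact Iso.refl _
  | succ k ih =>
    rw [Function.iterate_succ_apply', Function.iterate_succ_apply']
    exact ((F.commShiftIso (1 : ℤ)).app _).symm ≪≫ F.mapIso ih

lemma stmt18_iter_sub (F : C ⥤ C) [F.CommShift ℤ] [F.IsTriangulated] [F.Additive]
    (δ : ℝ → C → ℝ)
    (hsub : ∀ t (Tri : Triangle C), Tri ∈ (distTriang C) →
      δ t Tri.obj₂ ≤ δ t Tri.obj₁ + δ t Tri.obj₃)
    (t : ℝ) (k : ℕ) :
    ∀ Tri ∈ distTriang C, δ t ((fun Y => F.obj Y)^[k] Tri.obj₂) ≤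
      δ t ((fun Y => F.obj Y)^[k] Tri.obj₁) + δ t ((fun Y => F.obj Y)^[k] Tri.obj₃) := by
  induction k with
  | zero => exact fun Tri h => hsub t Tri h
  | succ k ih =>
    intro Tri hTri
    have h := ih (F.mapTriangle.obj Tri) (F.map_distinguished Tri hTri)
    simpa only [Function.iterate_succ_apply, Functor.mapTriangle_obj, Triangle.mk_obj₁, Triangle.mk_obj₂,
      Triangle.mk_obj₃] using h

end Aux
section Main

variable {C : Type*} [Category C] [Limits.HasZeroObject C] [Preadditive C]
    [HasShift C ℤ] [∀ (k : ℤ), (shiftFunctor C k).Additive] [Pretriangulated C]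

lemma stmt18_main_bound (F : C ⥤ C) [F.CommShift ℤ] [F.IsTriangulated] [F.Additive]
    (δ : ℝ → C → ℝ)
    (hzero : ∀ t (Z : C), Limits.IsZero Z → δ t Z = 0)
    (hsub : ∀ t (Tri : Triangle C), Tri ∈ (distTriang C) →
      δ t Tri.obj₂ ≤ δ t Tri.obj₁ + δ t Tri.obj₃)
    (t : ℝ) (l : ℕ) (Y : ℕ → C) (hYl : Limits.IsZero (Y l))
    (htri : ∀ i < l, ∃ (Tri : Triangle C) (_ : Tri ∈ distTriang C)
      (_ : Tri.obj₁ = Y i) (_ : Tri.obj₃ = Y (i + 1)), Nonempty (Tri.obj₂ ≅ F.obj (Y i)))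
    (M : ℝ) (hM1 : (1 : ℝ) ≤ M) (hM : ∀ j, j ≤ l → δ t (Y j) ≤ M) :
    ∀ N, ∀ i, i ≤ l →
      δ t ((fun Z => F.obj Z)^[N] (Y i)) ≤ M * ((N + l).choose (l - i)) := by
  have hM0 : (0 : ℝ) ≤ M := zero_le_one.trans hM1
  intro N
  induction N with
  | zero =>
    intro i hi
    have hc : (1 : ℝ) ≤ ((0 + l).choose (l - i) : ℝ) := by
      exact_mod_cast Nat.one_le_iff_ne_zero.mpr (Nat.choose_pos (by omega)).ne'
    calc δ t ((fun Z => F.obj Z)^[0] (Y i)) = δ t (Y i) := rfl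
      _ ≤ M := hM i hi
      _ ≤ M * ((0 + l).choose (l - i)) := le_mul_of_one_le_right hM0 hc
  | succ N ih =>
    intro i hi
    rcases eq_or_lt_of_le hi with rfl | hil
    · have hz : Limits.IsZero ((fun Z => F.obj Z)^[N + 1] (Y i)) :=
        stmt18_iter_isZero F hYl (N + 1)
      rw [hzero t _ hz]
      simp only [Nat.sub_self, Nat.choose_zero_right, Nat.cast_one, mul_one]
      exact hM0
    · obtain ⟨Tri, hdist, h1, h3, ⟨e⟩⟩ := htri i hil
      have key := stmt18_iter_sub F δ hsub t N Tri hdist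
      rw [h1, h3] at key
      have heq : δ t ((fun Z => F.obj Z)^[N] Tri.obj₂) =
          δ t ((fun Z => F.obj Z)^[N + 1] (Y i)) := by
        rw [Function.iterate_succ_apply]
        exact stmt18_delta_congr δ hzero hsub t (stmt18_iter_iso F e N)
      rw [heq] at key
      have b1 := ih i hi
      have b2 := ih (i + 1) (by omega)
      have hcho : ((N + 1 + l).choose (l - i)) =
          ((N + l).choose (l - i - 1)) + ((N + l).choose (l - i)) := by
        have h : l - i = (l - i - 1) + 1 := by omega
        rw [h, show N + 1 + l = (N + l) + 1 by omega, Nat.choose_succ_succ', Nat.add_sub_cancel]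
      have h2 : l - (i + 1) = l - i - 1 := by omega
      rw [h2] at b2
      calc δ t ((fun Z => F.obj Z)^[N + 1] (Y i))
          ≤ δ t ((fun Z => F.obj Z)^[N] (Y i)) + δ t ((fun Z => F.obj Z)^[N] (Y (i + 1))) := key
        _ ≤ M * ((N + l).choose (l - i)) + M * ((N + l).choose (l - i - 1)) := add_le_add b1 b2
        _ = M * ((N + 1 + l).choose (l - i)) := by rw [hcho]; push_cast; ring

end Main
/-- Lemma "entropy_1": if the complexity `δ` is subadditive over distinguished
triangles and there is a length-`l` filtration of the exact endofunctor `F` by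
triangles `Xᵢ → F Xᵢ → Xᵢ₊₁ → Xᵢ[1]` with `X₀ = T` a generator and `X_l = 0`,
then the entropy `h_t(F) = lim (1/N) log δ_t(T, F^N T)` is `≤ 0` for all `t`. -/
theorem stmt18 {C : Type*} [Category C] [Limits.HasZeroObject C] [Preadditive C]
    [HasShift C ℤ] [∀ (k : ℤ), (shiftFunctor C k).Additive] [Pretriangulated C]
    (F : C ⥤ C) [F.CommShift ℤ] [F.IsTriangulated] [F.Additive]
    (T : C) (δ : ℝ → C → ℝ)
    (hzero : ∀ t (Z : C), Limits.IsZero Z → δ t Z = 0)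
    (hsub : ∀ t (Tri : Triangle C), Tri ∈ (distTriang C) →
      δ t Tri.obj₂ ≤ δ t Tri.obj₁ + δ t Tri.obj₃)
    (l : ℕ) (X : ℕ → C) (hX0 : X 0 = T) (hXl : Limits.IsZero (X l))
    (htri : ∀ i < l, ∃ (f : X i ⟶ F.obj (X i)) (g : F.obj (X i) ⟶ X (i + 1))
      (h : X (i + 1) ⟶ (X i)⟦(1 : ℤ)⟧), Triangle.mk f g h ∈ distTriang C) :
    ∀ t : ℝ, Filter.limsup
      (fun N : ℕ => Real.log (δ t ((fun Y => F.obj Y)^[N] T)) / N) Filter.atTop ≤ 0 := by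
  intro t
  -- the bound constant
  set M : ℝ := 1 + ∑ j ∈ Finset.range (l + 1),
      (|δ t (X j)| + |δ t ((X j)⟦(1 : ℤ)⟧)|) with hMdef
  have hsum_nonneg : (0 : ℝ) ≤ ∑ j ∈ Finset.range (l + 1),
      (|δ t (X j)| + |δ t ((X j)⟦(1 : ℤ)⟧)|) :=
    Finset.sum_nonneg fun i _ => by positivity
  have hM1 : (1 : ℝ) ≤ M := by rw [hMdef]; linarith
  have hM0 : (0 : ℝ) ≤ M := zero_le_one.trans hM1
  have hterm : ∀ j, j ≤ l → |δ t (X j)| + |δ t ((X j)⟦(1 : ℤ)⟧)| ≤ M := by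
    intro j hj
    have h := Finset.single_le_sum
      (f := fun i => |δ t (X i)| + |δ t ((X i)⟦(1 : ℤ)⟧)|)
      (fun i _ => by positivity) (Finset.mem_range.mpr (by omega : j < l + 1))
    rw [hMdef]; linarith
  -- upper bound for `F^[N] T`
  have upper1 : ∀ N, δ t ((fun Y => F.obj Y)^[N] T) ≤ M * ((N + l).choose l) := by
    intro N
    have hb := stmt18_main_bound F δ hzero hsub t l X hXl
      (fun i hi => by
        obtain ⟨f, g, h, hd⟩ := htri i hi
        exact ⟨Triangle.mk f g h, hd, rfl, rfl, ⟨Iso.refl _⟩⟩)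
      M hM1
      (fun j hj => le_trans (le_trans (le_abs_self _) (by
        have := abs_nonneg (δ t ((X j)⟦(1 : ℤ)⟧)); linarith)) (hterm j hj))
      N 0 (Nat.zero_le l)
    rw [hX0] at hb
    simpa using hb
  -- upper bound for `F^[N] (T⟦1⟧)`
  have upper2 : ∀ N, δ t ((fun Y => F.obj Y)^[N] (T⟦(1 : ℤ)⟧)) ≤ M * ((N + l).choose l) := by
    intro N
    have hb := stmt18_main_bound F δ hzero hsub t l (fun j => (X j)⟦(1 : ℤ)⟧)
      ((shiftFunctor C (1 : ℤ)).map_isZero hXl)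
      (fun i hi => by
        obtain ⟨f, g, h, hd⟩ := htri i hi
        exact ⟨(Pretriangulated.Triangle.shiftFunctor C (1 : ℤ)).obj (Triangle.mk f g h),
          Triangle.shift_distinguished _ hd (1 : ℤ), rfl, rfl,
          ⟨((F.commShiftIso (1 : ℤ)).app (X i)).symm⟩⟩)
      M hM1
      (fun j hj => le_trans (le_trans (le_abs_self _) (by
        have := abs_nonneg (δ t (X j)); linarith)) (hterm j hj))
      N 0 (Nat.zero_le l)
    simp only [hX0] at hb
    simpa using hb
  -- lower bound
  have lower : ∀ N, -(M * ((N + l).choose l)) ≤ δ t ((fun Y => F.obj Y)^[N] T) := by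
    intro N
    have h0 := hsub t ((contractibleTriangle ((fun Y => F.obj Y)^[N] T)).rotate)
      (rot_of_distTriang _ (contractible_distinguished _))
    change δ t 0 ≤ δ t ((fun Y => F.obj Y)^[N] T) +
      δ t (((fun Y => F.obj Y)^[N] T)⟦(1 : ℤ)⟧) at h0
    rw [hzero t _ (isZero_zero C)] at h0
    have hsh : δ t (((fun Y => F.obj Y)^[N] T)⟦(1 : ℤ)⟧) =
        δ t ((fun Y => F.obj Y)^[N] (T⟦(1 : ℤ)⟧)) :=
      stmt18_delta_congr δ hzero hsub t (stmt18_iter_shift F T N)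
    have := upper2 N
    rw [hsh] at h0
    linarith
  have habs : ∀ N, |δ t ((fun Y => F.obj Y)^[N] T)| ≤ M * ((N + l).choose l) :=
    fun N => abs_le.mpr ⟨lower N, upper1 N⟩
  have hchoose1 : ∀ N : ℕ, (1 : ℝ) ≤ ((N + l).choose l : ℝ) := fun N => by
    exact_mod_cast Nat.one_le_iff_ne_zero.mpr (Nat.choose_pos (by omega)).ne'
  have hB1 : ∀ N : ℕ, (1 : ℝ) ≤ M * ((N + l).choose l) := fun N => by
    nlinarith [hchoose1 N]
  -- logarithmic bound
  have hlog : ∀ N : ℕ, Real.log (δ t ((fun Y => F.obj Y)^[N] T)) ≤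
      Real.log M + l * Real.log ((N : ℝ) + l) := by
    intro N
    rw [← Real.log_abs]
    have step1 : Real.log |δ t ((fun Y => F.obj Y)^[N] T)| ≤
        Real.log (M * ((N + l).choose l)) := by
      rcases eq_or_lt_of_le (abs_nonneg (δ t ((fun Y => F.obj Y)^[N] T))) with h | h
      · rw [← h, Real.log_zero]
        exact Real.log_nonneg (hB1 N)
      · exact Real.log_le_log h (habs N)
    have hMpos : (0 : ℝ) < M := lt_of_lt_of_le zero_lt_one hM1
    have hcpos : (0 : ℝ) < ((N + l).choose l : ℝ) := lt_of_lt_of_le zero_lt_one (hchoose1 N)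
    have step2 : Real.log (M * ((N + l).choose l)) =
        Real.log M + Real.log ((N + l).choose l) :=
      Real.log_mul hMpos.ne' hcpos.ne'
    have hle : ((N + l).choose l : ℝ) ≤ ((N : ℝ) + l) ^ l := by
      calc ((N + l).choose l : ℝ) ≤ ((N + l : ℕ) ^ l : ℕ) := by
            exact_mod_cast Nat.choose_le_pow (N + l) l
        _ = ((N : ℝ) + l) ^ l := by push_cast; ring
    have step3 : Real.log ((N + l).choose l) ≤ l * Real.log ((N : ℝ) + l) := by
      rw [← Real.log_pow]
      exact Real.log_le_log hcpos hle
    linarith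
  -- the comparison sequence tends to zero
  have t1 : Filter.Tendsto (fun x : ℝ => Real.log x / x) Filter.atTop (nhds 0) :=
    Real.isLittleO_log_id_atTop.tendsto_div_nhds_zero
  have t2 : Filter.Tendsto (fun N : ℕ => (N : ℝ) + l) Filter.atTop Filter.atTop :=
    Filter.tendsto_atTop_add_const_right _ _ tendsto_natCast_atTop_atTop
  have t3 : Filter.Tendsto (fun N : ℕ => Real.log ((N : ℝ) + l) / ((N : ℝ) + l))
      Filter.atTop (nhds 0) := t1.comp t2
  have t4 : Filter.Tendsto (fun N : ℕ => ((N : ℝ) + l) / N) Filter.atTop (nhds 1) := by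
    have h := Filter.Tendsto.add (tendsto_const_nhds (x := (1 : ℝ)))
      (Filter.Tendsto.mul (tendsto_const_nhds (x := (l : ℝ)))
        tendsto_one_div_atTop_nhds_zero_nat)
    simp only [mul_zero, add_zero] at h
    apply h.congr'
    filter_upwards [Filter.eventually_ge_atTop 1] with N hN
    have hN0 : (N : ℝ) ≠ 0 := by positivity
    field_simp
  have t5 : Filter.Tendsto (fun N : ℕ => Real.log ((N : ℝ) + l) / N)
      Filter.atTop (nhds 0) := by
    have h := t3.mul t4
    simp only [zero_mul] at h
    apply h.congr'
    filter_upwards [Filter.eventually_ge_atTop 1] with N hN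
    have hN0 : (N : ℝ) ≠ 0 := by positivity
    have hNl : (N : ℝ) + l ≠ 0 := by positivity
    field_simp
  have hg0 : Filter.Tendsto
      (fun N : ℕ => (Real.log M + l * Real.log ((N : ℝ) + l)) / N)
      Filter.atTop (nhds 0) := by
    have h := Filter.Tendsto.add
      (Filter.Tendsto.mul (tendsto_const_nhds (x := Real.log M))
        tendsto_one_div_atTop_nhds_zero_nat)
      (Filter.Tendsto.mul (tendsto_const_nhds (x := (l : ℝ))) t5)
    simp only [mul_zero, add_zero] at h
    apply h.congr
    intro N
    ring
  -- eventual bound by any ε > 0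
  have key : ∀ ε : ℝ, 0 < ε → ∀ᶠ N in Filter.atTop,
      Real.log (δ t ((fun Y => F.obj Y)^[N] T)) / N ≤ ε := by
    intro ε hε
    filter_upwards [hg0.eventually_lt_const hε, Filter.eventually_ge_atTop 1] with N hN1 hN2
    have hNpos : (0 : ℝ) < N := by exact_mod_cast hN2
    calc Real.log (δ t ((fun Y => F.obj Y)^[N] T)) / N
        ≤ (Real.log M + l * Real.log ((N : ℝ) + l)) / N := by gcongr; exact hlog N
      _ ≤ ε := hN1.le
  rw [Filter.limsup_eq]
  by_cases hbdd : BddBelow {a : ℝ | ∀ᶠ N in Filter.atTop,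
      Real.log (δ t ((fun Y => F.obj Y)^[N] T)) / N ≤ a}
  · refine le_of_forall_gt_imp_ge_of_dense fun ε hε => ?_
    exact csInf_le hbdd (key ε hε)
  · rw [Real.sInf_of_not_bddBelow hbdd]
end
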